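/- arXiv:1508.04351 — 2 statements merged into one kernel-verified Lean document; each statement's English description precedes it below -/
import Mathlib

section
/- Let S be a strictly positive (a.s.) integrable random variable on a probability space with m := 1 − E[S] ∈ (0,1), fix T > 0, and let n be the unique real number with N(n) = m. Set G(x) := E[S·1_{S ≥ e^x}] and assume √x·G(x) → 0 as x → ∞. Let I : ℝ → [0,∞) satisfy P_BS(x, I(x)) = E[(e^x − S)₊] for all x ∈ ℝ, and define Ψ(x) := √(2Tx)·e^{−n²/2}·( I(x) − √(2x/T) − n/√T − n²/(2√(2Tx)) ) for x > 0. Then 0 ≤ limsup_{x→∞} Ψ(x) ≤ 1; equivalently, I(x) = √(2x/T) + n/√T + n²/(2√(2Tx)) + (e^{n²/2}/√(2Tx))·Ψ(x) with 0 ≤ limsup_{x→∞} Ψ(x) ≤ 1. -/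
open MeasureTheory Filter

/-- Standard normal cumulative distribution function. -/
noncomputable def stdNormalCDF (y : ℝ) : ℝ :=
  ∫ t in Set.Iic y, Real.exp (-t ^ 2 / 2) / Real.sqrt (2 * Real.pi)

/-- Black-Scholes d₊ (maturity `T`, log-strike `x`, volatility `σ`). -/
noncomputable def dplus (T x σ : ℝ) : ℝ := -x / (σ * Real.sqrt T) + σ * Real.sqrt T / 2

/-- Black-Scholes d₋ (maturity `T`, log-strike `x`, volatility `σ`). -/
noncomputable def dminus (T x σ : ℝ) : ℝ := -x / (σ * Real.sqrt T) - σ * Real.sqrt T / 2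

/-- Black-Scholes Call price (maturity `T`, log-strike `x`, volatility `σ`),
with the convention `CBS T x 0 = max (1 - exp x) 0`. -/
noncomputable def CBS (T x σ : ℝ) : ℝ :=
  if σ = 0 then max (1 - Real.exp x) 0
  else stdNormalCDF (dplus T x σ) - Real.exp x * stdNormalCDF (dminus T x σ)

/-- Black-Scholes Put price (maturity `T`, log-strike `x`, volatility `σ`),
with the convention `PBS T x 0 = max (exp x - 1) 0`. -/
noncomputable def PBS (T x σ : ℝ) : ℝ :=
  if σ = 0 then max (Real.exp x - 1) 0
  else Real.exp x * stdNormalCDF (-dminus T x σ) - stdNormalCDF (-dplus T x σ)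

open MeasureTheory Filter Set Real

noncomputable def npdf (t : ℝ) : ℝ := Real.exp (-t ^ 2 / 2) / Real.sqrt (2 * Real.pi)

lemma npdf_pos (t : ℝ) : 0 < npdf t :=
  div_pos (Real.exp_pos _) (Real.sqrt_pos.2 (by positivity))

lemma npdf_eq (t : ℝ) : npdf t = Real.exp (-(1/2) * t ^ 2) / Real.sqrt (2 * Real.pi) := by
  unfold npdf; ring_nf

lemma continuous_npdf : Continuous npdf := by
  unfold npdf
  exact ((Real.continuous_exp.comp (by continuity)).div_const _)

lemma integrable_npdf : Integrable npdf := by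
  have h := (integrable_exp_neg_mul_sq (by norm_num : (0:ℝ) < 1/2)).div_const (Real.sqrt (2 * Real.pi))
  exact h.congr (Filter.Eventually.of_forall fun t => (npdf_eq t).symm)

lemma integral_npdf : ∫ t, npdf t = 1 := by
  have h := integral_gaussian (1/2 : ℝ)
  have : ∫ t, npdf t = (∫ t, Real.exp (-(1/2) * t ^ 2)) / Real.sqrt (2 * Real.pi) := by
    rw [← integral_div]
    exact integral_congr_ae (Filter.Eventually.of_forall fun t => npdf_eq t)
  rw [this, h]
  rw [div_eq_one_iff_eq (by positivity)]
  rw [show Real.pi / (1/2 : ℝ) = 2 * Real.pi by ring]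

lemma stdNormalCDF_eq (y : ℝ) : stdNormalCDF y = ∫ t in Set.Iic y, npdf t := rfl

lemma stdNormalCDF_sub (a b : ℝ) :
    stdNormalCDF b - stdNormalCDF a = ∫ t in a..b, npdf t := by
  rw [stdNormalCDF_eq, stdNormalCDF_eq]
  exact intervalIntegral.integral_Iic_sub_Iic integrable_npdf.integrableOn
    integrable_npdf.integrableOn

lemma stdNormalCDF_strictMono : StrictMono stdNormalCDF := by
  intro a b hab
  have h : 0 < ∫ t in a..b, npdf t :=
    intervalIntegral.intervalIntegral_pos_of_pos
      (integrable_npdf.intervalIntegrable) (fun t => npdf_pos t) hab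
  have := stdNormalCDF_sub a b
  linarith

lemma stdNormalCDF_pos (y : ℝ) : 0 < stdNormalCDF y := by
  have h1 : stdNormalCDF (y - 1) < stdNormalCDF y := stdNormalCDF_strictMono (by linarith)
  have h2 : (0:ℝ) ≤ stdNormalCDF (y - 1) := by
    rw [stdNormalCDF_eq]
    exact setIntegral_nonneg measurableSet_Iic fun t _ => (npdf_pos t).le
  linarith

lemma stdNormalCDF_Ioi (y : ℝ) : stdNormalCDF y + ∫ t in Ioi y, npdf t = 1 := by
  rw [stdNormalCDF_eq, intervalIntegral.integral_Iic_add_Ioi integrable_npdf.integrableOn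
    integrable_npdf.integrableOn, integral_npdf]

lemma stdNormalCDF_neg (y : ℝ) : stdNormalCDF (-y) = ∫ t in Ioi y, npdf t := by
  rw [stdNormalCDF_eq]
  have h : ∀ t : ℝ, npdf (-t) = npdf t := by
    intro t; unfold npdf; ring_nf
  calc ∫ t in Iic (-y), npdf t = ∫ t in Iic (-y), npdf (-t) :=
        (integral_congr_ae (Filter.Eventually.of_forall fun t => (h t).symm))
    _ = ∫ t in Ioi y, npdf t := by rw [integral_comp_neg_Iic]; norm_num

lemma stdNormalCDF_neg_eq (y : ℝ) : stdNormalCDF (-y) = 1 - stdNormalCDF y := by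
  have := stdNormalCDF_Ioi y
  rw [stdNormalCDF_neg]; linarith

lemma stdNormalCDF_lt_one (y : ℝ) : stdNormalCDF y < 1 := by
  have := stdNormalCDF_pos (-y)
  rw [stdNormalCDF_neg_eq] at this; linarith

lemma hasDerivAt_stdNormalCDF (y : ℝ) : HasDerivAt stdNormalCDF (npdf y) y := by
  have key : ∀ z : ℝ, stdNormalCDF z = stdNormalCDF 0 + ∫ t in (0:ℝ)..z, npdf t := by
    intro z; have := stdNormalCDF_sub 0 z; linarith
  have h : HasDerivAt (fun z => stdNormalCDF 0 + ∫ t in (0:ℝ)..z, npdf t) (npdf y) y := by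
    apply HasDerivAt.const_add
    exact intervalIntegral.integral_hasDerivAt_right
      integrable_npdf.intervalIntegrable
      continuous_npdf.stronglyMeasurable.stronglyMeasurableAtFilter
      continuous_npdf.continuousAt
  exact h.congr_of_eventuallyEq (Filter.Eventually.of_forall fun z => key z)

lemma hasDerivAt_npdf (t : ℝ) : HasDerivAt npdf (-(t * npdf t)) t := by
  have h1 : HasDerivAt (fun u : ℝ => -u ^ 2 / 2) (-t) t := by
    have : HasDerivAt (fun u : ℝ => -u ^ 2 / 2) (-(2 * t ^ (2-1)) / 2) t := by
      exact ((hasDerivAt_pow 2 t).neg).div_const 2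
    norm_num at this
    convert this using 1
    ring
  have h2 : HasDerivAt (fun u : ℝ => Real.exp (-u ^ 2 / 2)) (Real.exp (-t ^ 2 / 2) * (-t)) t :=
    h1.exp
  have h3 := h2.div_const (Real.sqrt (2 * Real.pi))
  exact h3.congr_deriv (by unfold npdf; ring)

lemma tendsto_npdf_atTop : Tendsto npdf atTop (nhds 0) := by
  have h1 : Tendsto (fun t : ℝ => -t ^ 2 / 2) atTop atBot := by
    apply Tendsto.atBot_div_const (by norm_num)
    exact tendsto_neg_atBot_iff.2 (tendsto_pow_atTop (by norm_num : 2 ≠ 0))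
  have h2 := (Real.tendsto_exp_atBot.comp h1).div_const (Real.sqrt (2 * Real.pi))
  simp only [zero_div] at h2
  exact h2.congr (fun t => rfl)

lemma integrable_id_mul_npdf : Integrable (fun t : ℝ => t * npdf t) := by
  have h := (integrable_mul_exp_neg_mul_sq (by norm_num : (0:ℝ) < 1/2)).div_const
    (Real.sqrt (2 * Real.pi))
  apply h.congr (Filter.Eventually.of_forall fun t => ?_)
  unfold npdf; ring_nf

lemma integral_Ioi_id_mul_npdf (y : ℝ) : ∫ t in Ioi y, t * npdf t = npdf y := by
  have hlim : Tendsto (fun t => -npdf t) atTop (nhds 0) := by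
    simpa using tendsto_npdf_atTop.neg
  have h := MeasureTheory.integral_Ioi_of_hasDerivAt_of_tendsto'
    (f := fun t => -npdf t) (f' := fun t => t * npdf t) (a := y)
    (fun t _ => (hasDerivAt_npdf t).neg.congr_deriv (neg_neg _))
    integrable_id_mul_npdf.integrableOn hlim
  rw [h]; ring

lemma mills_upper {y : ℝ} (hy : 0 < y) : stdNormalCDF (-y) ≤ npdf y / y := by
  rw [stdNormalCDF_neg]
  have h1 : ∫ t in Ioi y, npdf t ≤ ∫ t in Ioi y, (t / y) * npdf t := by
    apply setIntegral_mono_on integrable_npdf.integrableOn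
      ((integrable_id_mul_npdf.div_const y).congr
        (Filter.Eventually.of_forall fun t => by ring)).integrableOn
      measurableSet_Ioi
    intro t ht
    have hty : y ≤ t := (le_of_lt ht)
    have h2 : 1 ≤ t / y := (one_le_div hy).2 hty
    nlinarith [npdf_pos t]
  have h2 : ∫ t in Ioi y, (t / y) * npdf t = npdf y / y := by
    have : ∀ t : ℝ, (t / y) * npdf t = (t * npdf t) / y := fun t => by ring
    simp_rw [this]
    rw [integral_div, integral_Ioi_id_mul_npdf]
  linarith

noncomputable def millsg (t : ℝ) : ℝ := npdf t * (1 / t - 1 / t ^ 3)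

lemma hasDerivAt_millsg {t : ℝ} (ht : t ≠ 0) :
    HasDerivAt millsg (npdf t * (3 / t ^ 4 - 1)) t := by
  have h1 : HasDerivAt (fun u : ℝ => 1 / u - 1 / u ^ 3) (-1 / t ^ 2 + 3 / t ^ 4) t := by
    have ha : HasDerivAt (fun u : ℝ => u⁻¹) (-(t ^ 2)⁻¹) t := hasDerivAt_inv ht
    have hb : HasDerivAt (fun u : ℝ => (u ^ 3)⁻¹) (-(3 * t ^ 2) / (t ^ 3) ^ 2) t := by
      have := (hasDerivAt_pow 3 t).inv (pow_ne_zero 3 ht)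
      exact this.congr_deriv (by norm_num)
    have := ha.sub hb
    simp only [one_div]
    exact this.congr_deriv (by field_simp; ring)
  have h2 := (hasDerivAt_npdf t).mul h1
  have : millsg = fun u : ℝ => npdf u * (1 / u - 1 / u ^ 3) := rfl
  rw [this]
  exact h2.congr_deriv (by field_simp; ring)

lemma tendsto_millsg_atTop : Tendsto millsg atTop (nhds 0) := by
  have h1 : Tendsto (fun t : ℝ => 1 / t - 1 / t ^ 3) atTop (nhds 0) := by
    have ha : Tendsto (fun t : ℝ => 1 / t) atTop (nhds 0) := by
      simpa using tendsto_inv_atTop_zero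
    have hb : Tendsto (fun t : ℝ => 1 / t ^ 3) atTop (nhds 0) := by
      apply Tendsto.comp ha (tendsto_pow_atTop (by norm_num : 3 ≠ 0))
    simpa using ha.sub hb
  have h2 := tendsto_npdf_atTop.mul h1
  simp only [zero_mul] at h2
  exact h2.congr (fun t => rfl)

lemma mills_lower {y : ℝ} (hy : 2 ≤ y) :
    npdf y * (1 / y - 1 / y ^ 3) ≤ stdNormalCDF (-y) := by
  have hy0 : 0 < y := by linarith
  have hint : IntegrableOn (fun t => npdf t * (1 - 3 / t ^ 4)) (Ioi y) := by
    apply Integrable.mono (integrable_npdf.integrableOn)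
    · apply AEStronglyMeasurable.mul
      · exact continuous_npdf.aestronglyMeasurable.restrict
      · exact ((measurable_const.div (measurable_id.pow_const 4)).const_sub 1).aestronglyMeasurable
    · rw [ae_restrict_iff' measurableSet_Ioi]
      apply Filter.Eventually.of_forall
      intro t ht
      have ht2 : (2:ℝ) ≤ t := le_of_lt (lt_of_le_of_lt hy ht)
      have h4 : (0:ℝ) < t ^ 4 := by positivity
      have h5 : 3 / t ^ 4 ≤ 1 := by
        rw [div_le_one h4]
        have h44 : (2:ℝ)^4 ≤ t^4 := pow_le_pow_left₀ (by norm_num) ht2 4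
        norm_num at h44; linarith
      have h6 : 0 ≤ 3 / t ^ 4 := by positivity
      have hp := npdf_pos t
      rw [Real.norm_eq_abs, Real.norm_eq_abs, abs_of_pos hp, abs_of_nonneg (by nlinarith)]
      nlinarith
  have hlim : Tendsto (fun t => -millsg t) atTop (nhds 0) := by
    simpa using tendsto_millsg_atTop.neg
  have key : ∫ t in Ioi y, npdf t * (1 - 3 / t ^ 4) = millsg y := by
    have h := MeasureTheory.integral_Ioi_of_hasDerivAt_of_tendsto'
      (f := fun t => -millsg t) (f' := fun t => npdf t * (1 - 3 / t ^ 4)) (a := y)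
      (fun t htm => by
        have ht0 : t ≠ 0 := by
          have h7 : y ≤ t := htm
          intro h; rw [h] at h7; linarith
        have := (hasDerivAt_millsg ht0).neg
        exact this.congr_deriv (by ring))
      hint hlim
    rw [h]; ring
  have hmono : ∫ t in Ioi y, npdf t * (1 - 3 / t ^ 4) ≤ ∫ t in Ioi y, npdf t := by
    apply setIntegral_mono_on hint integrable_npdf.integrableOn measurableSet_Ioi
    intro t ht
    have h6 : 0 ≤ 3 / t ^ 4 := by
      have : (0:ℝ) < t := lt_of_lt_of_le hy0 (le_of_lt ht)
      positivity
    nlinarith [npdf_pos t]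
  rw [stdNormalCDF_neg]
  calc npdf y * (1 / y - 1 / y ^ 3) = millsg y := rfl
    _ = ∫ t in Ioi y, npdf t * (1 - 3 / t ^ 4) := key.symm
    _ ≤ ∫ t in Ioi y, npdf t := hmono

lemma npdf_def (t : ℝ) : npdf t = Real.exp (-t ^ 2 / 2) / Real.sqrt (2 * Real.pi) := rfl

set_option maxHeartbeats 1600000 in
/-- higher-order right-wing expansion of the Put-implied volatility under
the tail condition `√x · G(x) → 0`, where `G(x) = E[S·1_{S ≥ eˣ}]`. -/
theorem iv_right_wing_higher_order_o
    {Ω : Type*} [MeasurableSpace Ω] (μ : Measure Ω) [IsProbabilityMeasure μ]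
    (S : Ω → ℝ) (hSpos : ∀ᵐ ω ∂μ, 0 < S ω) (hSint : Integrable S μ)
    (m : ℝ) (hm : m = 1 - ∫ ω, S ω ∂μ) (hm0 : 0 < m) (hm1 : m < 1)
    (T : ℝ) (hT : 0 < T) (n : ℝ) (hn : stdNormalCDF n = m)
    (hG : Tendsto
      (fun x => Real.sqrt x * ∫ ω in {ω | Real.exp x ≤ S ω}, S ω ∂μ) atTop (nhds 0))
    (I : ℝ → ℝ) (hInonneg : ∀ x, 0 ≤ I x)
    (hI : ∀ x : ℝ, PBS T x (I x) = ∫ ω, max (Real.exp x - S ω) 0 ∂μ)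
    (Ψ : ℝ → ℝ)
    (hΨ : ∀ x : ℝ, Ψ x = Real.sqrt (2 * T * x) * Real.exp (-n ^ 2 / 2) *
      (I x - Real.sqrt (2 * x / T) - n / Real.sqrt T
        - n ^ 2 / (2 * Real.sqrt (2 * T * x)))) :
    0 ≤ limsup Ψ atTop ∧ limsup Ψ atTop ≤ 1 := by
  have hES : ∫ ω, S ω ∂μ = 1 - m := by linarith
  set C : ℝ → ℝ := fun x => ∫ ω, max (S ω - Real.exp x) 0 ∂μ with hCdef
  set G : ℝ → ℝ := fun x => ∫ ω in {ω | Real.exp x ≤ S ω}, S ω ∂μ with hGdef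
  have hC_int : ∀ x : ℝ, Integrable (fun ω => max (S ω - Real.exp x) 0) μ :=
    fun x => (hSint.sub (integrable_const _)).pos_part
  have hC_nonneg : ∀ x, 0 ≤ C x :=
    fun x => integral_nonneg fun ω => le_max_right _ _
  have hPut : ∀ x : ℝ, ∫ ω, max (Real.exp x - S ω) 0 ∂μ = Real.exp x - 1 + m + C x := by
    intro x
    have hpt : ∀ ω, max (Real.exp x - S ω) 0
        = (Real.exp x - S ω) + max (S ω - Real.exp x) 0 := by
      intro ω
      rcases le_total (S ω) (Real.exp x) with h | h
      · rw [max_eq_left (by linarith), max_eq_right (by linarith)]; ring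
      · rw [max_eq_right (by linarith), max_eq_left (by linarith)]; ring
    calc ∫ ω, max (Real.exp x - S ω) 0 ∂μ
        = ∫ ω, ((Real.exp x - S ω) + max (S ω - Real.exp x) 0) ∂μ :=
          integral_congr_ae (Filter.Eventually.of_forall hpt)
      _ = (∫ ω, (Real.exp x - S ω) ∂μ) + C x :=
          integral_add ((integrable_const _).sub hSint) (hC_int x)
      _ = Real.exp x - 1 + m + C x := by
          rw [integral_sub (integrable_const _) hSint, integral_const, hES]
          simp [measure_univ]
          ring
  have hIpos : ∀ x : ℝ, 0 ≤ x → 0 < I x := by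
    intro x hx
    rcases (hInonneg x).lt_or_eq with h | h
    · exact h
    · exfalso
      have h1 := hI x
      rw [← h, PBS, if_pos rfl] at h1
      rw [hPut x, max_eq_left (by nlinarith [Real.one_le_exp hx])] at h1
      have := hC_nonneg x
      linarith
  have hKey : ∀ x : ℝ, 0 ≤ x →
      stdNormalCDF (dplus T x (I x)) - Real.exp x * stdNormalCDF (dminus T x (I x))
        = m + C x := by
    intro x hx
    have h1 := hI x
    rw [PBS, if_neg (hIpos x hx).ne', hPut x, stdNormalCDF_neg_eq, stdNormalCDF_neg_eq] at h1
    have hex := Real.exp_pos x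
    nlinarith [h1]
  -- tail bound : C x ≤ G x
  obtain ⟨S', hS'meas, hS'ae⟩ : ∃ S' : Ω → ℝ, StronglyMeasurable S' ∧ S =ᵐ[μ] S' :=
    ⟨hSint.1.mk S, hSint.1.stronglyMeasurable_mk, hSint.1.ae_eq_mk⟩
  have hS'int : Integrable S' μ := hSint.congr hS'ae
  have hS'pos : ∀ᵐ ω ∂μ, 0 < S' ω := by
    filter_upwards [hSpos, hS'ae] with ω h1 h2
    rwa [← h2]
  have hCle : ∀ x : ℝ, C x ≤ G x := by
    intro x
    have hsmeas : MeasurableSet {ω | Real.exp x ≤ S' ω} :=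
      measurableSet_le measurable_const hS'meas.measurable
    have hsetae : {ω | Real.exp x ≤ S ω} =ᵐ[μ] {ω | Real.exp x ≤ S' ω} := by
      rw [Filter.eventuallyEq_set]
      filter_upwards [hS'ae] with ω h
      simp [h]
    have hGeq : G x = ∫ ω in {ω | Real.exp x ≤ S' ω}, S' ω ∂μ := by
      rw [hGdef]
      simp only
      rw [Measure.restrict_congr_set hsetae]
      exact integral_congr_ae (ae_restrict_of_ae hS'ae)
    have hCeq : C x = ∫ ω, max (S' ω - Real.exp x) 0 ∂μ := by
      apply integral_congr_ae
      filter_upwards [hS'ae] with ω h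
      rw [h]
    rw [hCeq, hGeq, ← integral_indicator hsmeas]
    apply integral_mono_ae ((hC_int x).congr (by filter_upwards [hS'ae] with ω h; rw [h]))
      (hS'int.indicator hsmeas)
    filter_upwards [hS'pos] with ω hpos
    rw [Set.indicator_apply]
    simp only [Set.mem_setOf_eq]
    by_cases hc : Real.exp x ≤ S' ω
    · rw [if_pos hc]
      have := (Real.exp_pos x).le
      rcases le_total (S' ω - Real.exp x) 0 with h | h
      · rw [max_eq_right h]; linarith
      · rw [max_eq_left h]; linarith
    · rw [if_neg hc, max_eq_right (by push_neg at hc; linarith)]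
  have hsqrtTop : Tendsto Real.sqrt atTop atTop := by
    apply Filter.Tendsto.congr' (f₁ := fun x : ℝ => x ^ (1/2 : ℝ))
    · filter_upwards [eventually_ge_atTop (0:ℝ)] with x hx
      rw [Real.sqrt_eq_rpow]
    · exact tendsto_rpow_atTop (by norm_num)
  have hsqrt2x : Tendsto (fun x : ℝ => Real.sqrt (2 * x)) atTop atTop :=
    hsqrtTop.comp (tendsto_id.const_mul_atTop (by norm_num))
  have hCx0 : Tendsto (fun x => Real.sqrt (2 * x) * C x) atTop (nhds 0) := by
    have h0 : Tendsto (fun x : ℝ => Real.sqrt 2 * (Real.sqrt x * G x)) atTop (nhds 0) := by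
      simpa using hG.const_mul (Real.sqrt 2)
    apply tendsto_of_tendsto_of_tendsto_of_le_of_le' tendsto_const_nhds h0
    · filter_upwards [eventually_ge_atTop (0:ℝ)] with x hx
      positivity
    · filter_upwards [eventually_ge_atTop (0:ℝ)] with x hx
      have hGnn : 0 ≤ G x := le_trans (hC_nonneg x) (hCle x)
      calc Real.sqrt (2 * x) * C x ≤ Real.sqrt (2 * x) * G x := by
            apply mul_le_mul_of_nonneg_left (hCle x) (Real.sqrt_nonneg _)
        _ = Real.sqrt 2 * (Real.sqrt x * G x) := by
            rw [Real.sqrt_mul (by norm_num : (0:ℝ) ≤ 2) x]; ring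
  have hC0 : Tendsto C atTop (nhds 0) := by
    apply tendsto_of_tendsto_of_tendsto_of_le_of_le' tendsto_const_nhds hCx0
    · filter_upwards with x using hC_nonneg x
    · filter_upwards [eventually_ge_atTop (1:ℝ)] with x hx
      have h1 : 1 ≤ Real.sqrt (2 * x) := by
        rw [show (1:ℝ) = Real.sqrt 1 by simp]
        exact Real.sqrt_le_sqrt (by linarith)
      nlinarith [hC_nonneg x]
  -- analytic setup
  have hsT : 0 < Real.sqrt T := Real.sqrt_pos.2 hT
  set D : ℝ → ℝ := fun x => dplus T x (I x) with hDdef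
  set y : ℝ → ℝ := fun x => x / (I x * Real.sqrt T) + I x * Real.sqrt T / 2 with hydef
  have hspos : ∀ x : ℝ, 0 ≤ x → 0 < I x * Real.sqrt T := fun x hx =>
    mul_pos (hIpos x hx) hsT
  have hy_pos : ∀ x : ℝ, 0 < x → 0 < y x := by
    intro x hx
    have := hspos x hx.le
    have : 0 < x / (I x * Real.sqrt T) := div_pos hx this
    have h2 : 0 < I x * Real.sqrt T / 2 := by linarith [hspos x hx.le]
    simp only [hydef]
    linarith
  have hdm : ∀ x : ℝ, dminus T x (I x) = -(y x) := by
    intro x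
    simp only [hydef, dminus]
    ring
  have hd_eq : ∀ x : ℝ, D x = -(x / (I x * Real.sqrt T)) + I x * Real.sqrt T / 2 := by
    intro x
    simp only [hDdef, dplus]
    ring
  have hy_sq : ∀ x : ℝ, 0 ≤ x → (y x) ^ 2 = (D x) ^ 2 + 2 * x := by
    intro x hx
    have hs := (hspos x hx).ne'
    have hI0 : I x ≠ 0 := (hIpos x hx).ne'
    have hT0 : Real.sqrt T ≠ 0 := hsT.ne'
    rw [hd_eq, hydef]
    field_simp
    ring
  have hs_eq : ∀ x : ℝ, I x * Real.sqrt T = D x + y x := by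
    intro x
    rw [hd_eq, hydef]
    ring
  have hy_ge : ∀ x : ℝ, 0 < x → Real.sqrt (2 * x) ≤ y x := by
    intro x hx
    have h1 : 2 * x ≤ (y x) ^ 2 := by
      rw [hy_sq x hx.le]
      nlinarith [sq_nonneg (D x)]
    calc Real.sqrt (2 * x) ≤ Real.sqrt ((y x) ^ 2) := Real.sqrt_le_sqrt h1
      _ = y x := Real.sqrt_sq (hy_pos x hx).le
  have hKey2 : ∀ x : ℝ, 0 ≤ x →
      stdNormalCDF (D x) = m + C x + Real.exp x * stdNormalCDF (-(y x)) := by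
    intro x hx
    have := hKey x hx
    rw [hdm x] at this
    simp only [hDdef]
    linarith
  have hDgt : ∀ x : ℝ, 0 ≤ x → n < D x := by
    intro x hx
    have h1 : stdNormalCDF n < stdNormalCDF (D x) := by
      rw [hn, hKey2 x hx]
      have := hC_nonneg x
      have h2 : 0 < Real.exp x * stdNormalCDF (-(y x)) :=
        mul_pos (Real.exp_pos x) (stdNormalCDF_pos _)
      linarith
    exact stdNormalCDF_strictMono.lt_iff_lt.1 h1
  -- exp x * N(-y) = relates to npdf
  have hexp_npdf : ∀ x : ℝ, 0 ≤ x → Real.exp x * npdf (y x) = npdf (D x) := by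
    intro x hx
    rw [npdf_def, npdf_def, hy_sq x hx]
    rw [eq_div_iff (by positivity : Real.sqrt (2 * Real.pi) ≠ 0), mul_assoc,
      div_mul_cancel₀ _ (by positivity : Real.sqrt (2 * Real.pi) ≠ 0),
      ← Real.exp_add]
    congr 1
    ring
  have hExN_le : ∀ x : ℝ, 0 < x →
      Real.exp x * stdNormalCDF (-(y x)) ≤ npdf (D x) / Real.sqrt (2 * x) := by
    intro x hx
    have hyp := hy_pos x hx
    have h1 : Real.exp x * stdNormalCDF (-(y x)) ≤ Real.exp x * (npdf (y x) / y x) :=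
      mul_le_mul_of_nonneg_left (mills_upper hyp) (Real.exp_pos x).le
    have h2 : Real.exp x * (npdf (y x) / y x) = npdf (D x) / y x := by
      rw [mul_div_assoc'] ; rw [hexp_npdf x hx.le]
    have h3 : npdf (D x) / y x ≤ npdf (D x) / Real.sqrt (2 * x) := by
      apply div_le_div_of_nonneg_left (npdf_pos _).le _ (hy_ge x hx)
      positivity
    linarith
  have hnpdf_le : ∀ t : ℝ, npdf t ≤ 1 / Real.sqrt (2 * Real.pi) := by
    intro t
    rw [npdf_def]
    have h1 : Real.exp (-t ^ 2 / 2) ≤ 1 := by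
      rw [← Real.exp_zero]
      apply Real.exp_le_exp.2
      nlinarith [sq_nonneg t]
    exact div_le_div_of_nonneg_right h1 (by positivity) |>.trans_eq rfl
  have hc2pi : (0:ℝ) < Real.sqrt (2 * Real.pi) := by positivity
  -- upper bound function tends to m
  have hUb : Tendsto (fun x => m + C x + 1 / Real.sqrt (2 * Real.pi) / Real.sqrt (2 * x))
      atTop (nhds m) := by
    have h1 : Tendsto (fun x : ℝ => 1 / Real.sqrt (2 * Real.pi) / Real.sqrt (2 * x))
        atTop (nhds 0) := by
      have := hsqrt2x.inv_tendsto_atTop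
      have h2 := this.const_mul (1 / Real.sqrt (2 * Real.pi))
      simp only [mul_zero] at h2
      exact h2.congr (fun x => by simp only [Pi.inv_apply]; ring)
    have := (tendsto_const_nhds (x := m) (f := atTop)).add (hC0.add h1)
    simp only [add_zero] at this
    exact this.congr (fun x => by ring)
  have hND_le : ∀ x : ℝ, 0 < x → stdNormalCDF (D x)
      ≤ m + C x + 1 / Real.sqrt (2 * Real.pi) / Real.sqrt (2 * x) := by
    intro x hx
    rw [hKey2 x hx.le]
    have h1 := hExN_le x hx
    have h2 : npdf (D x) / Real.sqrt (2 * x)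
        ≤ 1 / Real.sqrt (2 * Real.pi) / Real.sqrt (2 * x) := by
      apply div_le_div_of_nonneg_right (hnpdf_le (D x)) (by positivity)
    linarith
  have hD_tendsto : Tendsto D atTop (nhds n) := by
    rw [tendsto_order]
    constructor
    · intro a ha
      filter_upwards [eventually_ge_atTop (0:ℝ)] with x hx
      exact lt_trans ha (hDgt x hx)
    · intro b hb
      have hNb : m < stdNormalCDF b := by rw [← hn]; exact stdNormalCDF_strictMono hb
      have hev : ∀ᶠ x : ℝ in atTop,
          m + C x + 1 / Real.sqrt (2 * Real.pi) / Real.sqrt (2 * x) < stdNormalCDF b :=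
        hUb.eventually_lt_const hNb
      filter_upwards [hev, eventually_gt_atTop (0:ℝ)] with x h1 h2
      have := lt_of_le_of_lt (hND_le x h2) h1
      exact stdNormalCDF_strictMono.lt_iff_lt.1 this
  -- convergence of y and of sqrt(2x)/y
  have hyTop : Tendsto y atTop atTop := by
    apply tendsto_atTop_mono' atTop _ hsqrt2x
    filter_upwards [eventually_gt_atTop (0:ℝ)] with x hx
    exact hy_ge x hx
  have hyle : ∀ x : ℝ, 0 < x → y x ≤ |D x| + Real.sqrt (2 * x) := by
    intro x hx
    have h1 : (y x) ^ 2 ≤ (|D x| + Real.sqrt (2 * x)) ^ 2 := by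
      rw [hy_sq x hx.le]
      have h2 : Real.sqrt (2 * x) ^ 2 = 2 * x := Real.sq_sqrt (by linarith)
      have h3 : |D x| ^ 2 = (D x) ^ 2 := sq_abs _
      nlinarith [abs_nonneg (D x), Real.sqrt_nonneg (2 * x)]
    calc y x = Real.sqrt ((y x) ^ 2) := (Real.sqrt_sq (hy_pos x hx).le).symm
      _ ≤ Real.sqrt ((|D x| + Real.sqrt (2 * x)) ^ 2) := Real.sqrt_le_sqrt h1
      _ = |D x| + Real.sqrt (2 * x) := Real.sqrt_sq (by positivity)
  have hr : Tendsto (fun x => Real.sqrt (2 * x) / y x) atTop (nhds 1) := by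
    have hq : Tendsto (fun x => |D x| / Real.sqrt (2 * x)) atTop (nhds 0) := by
      have h1 : Tendsto (fun x => |D x|) atTop (nhds |n|) :=
        (continuous_abs.tendsto n).comp hD_tendsto
      have h2 := h1.mul hsqrt2x.inv_tendsto_atTop
      simp only [mul_zero] at h2
      exact h2.congr (fun x => by simp only [Pi.inv_apply]; ring)
    have hlow : Tendsto (fun x => 1 / (|D x| / Real.sqrt (2 * x) + 1)) atTop (nhds 1) := by
      have := (tendsto_const_nhds (x := (1:ℝ)) (f := atTop)).div
        (hq.add (tendsto_const_nhds (x := (1:ℝ)))) (by norm_num : (0:ℝ) + 1 ≠ 0)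
      simp only [zero_add, div_one] at this
      exact this.congr (fun x => by simp [Pi.div_apply])
    apply tendsto_of_tendsto_of_tendsto_of_le_of_le' hlow tendsto_const_nhds
    · filter_upwards [eventually_gt_atTop (0:ℝ)] with x hx
      have h2x : 0 < Real.sqrt (2 * x) := Real.sqrt_pos.2 (by linarith)
      have hyp := hy_pos x hx
      rw [div_le_div_iff₀ (by positivity) hyp]
      have := hyle x hx
      have habs : 0 ≤ |D x| := abs_nonneg _
      calc 1 * y x = y x := by ring
        _ ≤ |D x| + Real.sqrt (2 * x) := hyle x hx
        _ = (|D x| / Real.sqrt (2 * x) + 1) * Real.sqrt (2 * x) := by field_simp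
        _ = Real.sqrt (2 * x) * (|D x| / Real.sqrt (2 * x) + 1) := by ring
    · filter_upwards [eventually_gt_atTop (0:ℝ)] with x hx
      exact div_le_one_of_le₀ (hy_ge x hx) (hy_pos x hx).le
  have h1y2 : Tendsto (fun x => 1 - 1 / (y x) ^ 2) atTop (nhds 1) := by
    have h1 : Tendsto (fun x => (y x) ^ 2) atTop atTop :=
      (tendsto_pow_atTop (by norm_num : 2 ≠ 0)).comp hyTop
    have h2 := h1.inv_tendsto_atTop
    have := (tendsto_const_nhds (x := (1:ℝ)) (f := atTop)).sub h2
    simp only [sub_zero] at this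
    exact this.congr (fun x => by simp only [Pi.inv_apply]; ring)
  have hnpdfD : Tendsto (fun x => npdf (D x)) atTop (nhds (npdf n)) :=
    (continuous_npdf.tendsto n).comp hD_tendsto
  -- the squeeze for A
  have hA : Tendsto (fun x => Real.sqrt (2 * x) * (stdNormalCDF (D x) - m)) atTop
      (nhds (npdf n)) := by
    have hU_t : Tendsto (fun x => Real.sqrt (2 * x) * C x + npdf (D x)) atTop
        (nhds (npdf n)) := by
      have := hCx0.add hnpdfD
      simpa using this
    have hL_t : Tendsto
        (fun x => npdf (D x) * (Real.sqrt (2 * x) / y x) * (1 - 1 / (y x) ^ 2)) atTop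
        (nhds (npdf n)) := by
      have := (hnpdfD.mul hr).mul h1y2
      simpa using this
    apply tendsto_of_tendsto_of_tendsto_of_le_of_le' hL_t hU_t
    · filter_upwards [eventually_ge_atTop (2:ℝ)] with x hx
      have hx0 : (0:ℝ) < x := by linarith
      have hy2 : (2:ℝ) ≤ y x := by
        refine le_trans ?_ (hy_ge x hx0)
        nlinarith [Real.sq_sqrt (by linarith : (0:ℝ) ≤ 2 * x), Real.sqrt_nonneg (2 * x)]
      have hyp : 0 < y x := by linarith
      have h2x : 0 < Real.sqrt (2 * x) := Real.sqrt_pos.2 (by linarith)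
      have hml := mills_lower hy2
      have h1 : npdf (y x) * (1 / y x - 1 / (y x) ^ 3) ≤ stdNormalCDF (-(y x)) := hml
      have h2 : Real.exp x * (npdf (y x) * (1 / y x - 1 / (y x) ^ 3))
          ≤ Real.exp x * stdNormalCDF (-(y x)) :=
        mul_le_mul_of_nonneg_left h1 (Real.exp_pos x).le
      have h3 : Real.exp x * (npdf (y x) * (1 / y x - 1 / (y x) ^ 3))
          = npdf (D x) * (1 / y x - 1 / (y x) ^ 3) := by
        rw [← mul_assoc, hexp_npdf x hx0.le]
      have h4 : stdNormalCDF (D x) - m = C x + Real.exp x * stdNormalCDF (-(y x)) := by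
        rw [hKey2 x hx0.le]; ring
      have h5 : npdf (D x) * (Real.sqrt (2 * x) / y x) * (1 - 1 / (y x) ^ 2)
          = Real.sqrt (2 * x) * (npdf (D x) * (1 / y x - 1 / (y x) ^ 3)) := by
        field_simp
      rw [h5, h4]
      have h6 : Real.sqrt (2 * x) * (npdf (D x) * (1 / y x - 1 / (y x) ^ 3))
          ≤ Real.sqrt (2 * x) * (Real.exp x * stdNormalCDF (-(y x))) := by
        apply mul_le_mul_of_nonneg_left _ h2x.le
        rw [← h3]; exact h2
      have h7 : 0 ≤ C x := hC_nonneg x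
      nlinarith [h6]
    · filter_upwards [eventually_gt_atTop (0:ℝ)] with x hx
      have h2x : 0 < Real.sqrt (2 * x) := Real.sqrt_pos.2 (by linarith)
      have h4 : stdNormalCDF (D x) - m = C x + Real.exp x * stdNormalCDF (-(y x)) := by
        rw [hKey2 x hx.le]; ring
      rw [h4, mul_add]
      have h5 : Real.sqrt (2 * x) * (Real.exp x * stdNormalCDF (-(y x)))
          ≤ Real.sqrt (2 * x) * (npdf (D x) / Real.sqrt (2 * x)) :=
        mul_le_mul_of_nonneg_left (hExN_le x hx) h2x.le
      rw [mul_div_cancel₀ _ h2x.ne'] at h5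
      linarith
  -- mean value theorem : choose xi
  have hNcont : Continuous stdNormalCDF :=
    continuous_iff_continuousAt.2 fun t => (hasDerivAt_stdNormalCDF t).continuousAt
  have hMVT : ∀ x : ℝ, 0 ≤ x → ∃ c, c ∈ Ioo n (D x) ∧
      npdf c = (stdNormalCDF (D x) - stdNormalCDF n) / (D x - n) := by
    intro x hx
    obtain ⟨c, hc1, hc2⟩ := exists_hasDerivAt_eq_slope stdNormalCDF npdf (hDgt x hx)
      (hNcont.continuousOn) (fun t _ => hasDerivAt_stdNormalCDF t)
    exact ⟨c, hc1, hc2⟩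
  choose! ξ hξ1 hξ2 using hMVT
  have hξ_tendsto : Tendsto ξ atTop (nhds n) := by
    apply tendsto_of_tendsto_of_tendsto_of_le_of_le' tendsto_const_nhds hD_tendsto
    · filter_upwards [eventually_ge_atTop (0:ℝ)] with x hx
      exact (hξ1 x hx).1.le
    · filter_upwards [eventually_ge_atTop (0:ℝ)] with x hx
      exact (hξ1 x hx).2.le
  have hnpdfξ : Tendsto (fun x => npdf (ξ x)) atTop (nhds (npdf n)) :=
    (continuous_npdf.tendsto n).comp hξ_tendsto
  have hB : Tendsto (fun x => Real.sqrt (2 * x) * (D x - n)) atTop (nhds 1) := by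
    have h1 := hA.div hnpdfξ (npdf_pos n).ne'
    rw [div_self (npdf_pos n).ne'] at h1
    apply h1.congr'
    filter_upwards [eventually_ge_atTop (0:ℝ)] with x hx
    have hslope := hξ2 x hx
    have hdn : D x - n ≠ 0 := sub_ne_zero.2 (hDgt x hx).ne'
    rw [hn] at hslope
    have : stdNormalCDF (D x) - m = npdf (ξ x) * (D x - n) := by
      rw [hslope]
      field_simp
    simp only [Pi.div_apply]
    rw [this]
    have hnp : npdf (ξ x) ≠ 0 := (npdf_pos (ξ x)).ne'
    field_simp
  -- w := sqrt(2x)/(y + sqrt(2x)) tends to 1/2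
  have hw : Tendsto (fun x => Real.sqrt (2 * x) / (y x + Real.sqrt (2 * x))) atTop
      (nhds (1 / 2)) := by
    have h1 : Tendsto (fun x => (Real.sqrt (2 * x) / y x) / (1 + Real.sqrt (2 * x) / y x))
        atTop (nhds (1 / 2)) := by
      have h2 := hr.div ((tendsto_const_nhds (x := (1:ℝ))).add hr)
        (by norm_num : (1:ℝ) + 1 ≠ 0)
      norm_num at h2
      apply h2.congr
      intro z
      simp only [Pi.div_apply]
      rw [Real.sqrt_mul (by norm_num : (0:ℝ) ≤ 2) z]
    apply h1.congr'
    filter_upwards [eventually_gt_atTop (0:ℝ)] with x hx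
    have hyp := hy_pos x hx
    have h2x : 0 < Real.sqrt (2 * x) := Real.sqrt_pos.2 (by linarith)
    have hys : 0 < y x + Real.sqrt (2 * x) := by linarith
    field_simp
  -- Psi in terms of B, D, w
  have hΨeq : ∀ᶠ x : ℝ in atTop, Ψ x = Real.exp (-n ^ 2 / 2) *
      (Real.sqrt (2 * x) * (D x - n)
        + (D x) ^ 2 * (Real.sqrt (2 * x) / (y x + Real.sqrt (2 * x))) - n ^ 2 / 2) := by
    filter_upwards [eventually_gt_atTop (0:ℝ)] with x hx
    have hyp := hy_pos x hx
    have h2x : 0 < Real.sqrt (2 * x) := Real.sqrt_pos.2 (by linarith)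
    have hIx := hIpos x hx.le
    have h2Tx : Real.sqrt (2 * T * x) = Real.sqrt T * Real.sqrt (2 * x) := by
      rw [show 2 * T * x = T * (2 * x) by ring, Real.sqrt_mul hT.le]
    have h2xT : Real.sqrt (2 * x / T) = Real.sqrt (2 * x) / Real.sqrt T :=
      Real.sqrt_div (by linarith) T
    have hIxs : I x = (D x + y x) / Real.sqrt T := by
      rw [← hs_eq x]
      field_simp
    -- key algebraic identity
    have hyx2 : (y x - Real.sqrt (2 * x)) * (y x + Real.sqrt (2 * x)) = (D x) ^ 2 := by
      have h4 : Real.sqrt (2 * x) ^ 2 = 2 * x := Real.sq_sqrt (by linarith)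
      have h5 := hy_sq x hx.le
      nlinarith [h4, h5]
    have hys : 0 < y x + Real.sqrt (2 * x) := by linarith
    rw [hΨ x, h2Tx, h2xT, hIxs]
    have hD2 : (D x) ^ 2 * (Real.sqrt (2 * x) / (y x + Real.sqrt (2 * x)))
        = (y x - Real.sqrt (2 * x)) * Real.sqrt (2 * x) := by
      rw [← hyx2]
      field_simp
    rw [hD2]
    field_simp
    ring
  -- final limit
  have hΨlim : Tendsto Ψ atTop (nhds (Real.exp (-n ^ 2 / 2))) := by
    have hD2 : Tendsto (fun x => (D x) ^ 2) atTop (nhds (n ^ 2)) :=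
      ((continuous_pow 2).tendsto n).comp hD_tendsto
    have h1 : Tendsto (fun x => Real.sqrt (2 * x) * (D x - n)
        + (D x) ^ 2 * (Real.sqrt (2 * x) / (y x + Real.sqrt (2 * x))) - n ^ 2 / 2) atTop
        (nhds (1 + n ^ 2 * (1 / 2) - n ^ 2 / 2)) :=
      (hB.add (hD2.mul hw)).sub tendsto_const_nhds
    have h2 : (1 : ℝ) + n ^ 2 * (1 / 2) - n ^ 2 / 2 = 1 := by ring
    rw [h2] at h1
    have h3 := h1.const_mul (Real.exp (-n ^ 2 / 2))
    rw [mul_one] at h3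
    exact Tendsto.congr' (by filter_upwards [hΨeq] with x h; rw [h]) h3
  rw [hΨlim.limsup_eq]
  constructor
  · exact (Real.exp_pos _).le
  · rw [← Real.exp_zero]
    apply Real.exp_le_exp.2
    nlinarith [sq_nonneg n]
end

section
/- Let S be a strictly positive (a.s.) integrable random variable on a probability space with m := 1 − E[S] ∈ (0,1), fix T > 0, and let n be the unique real number with N(n) = m. Set G(x) := E[S·1_{S ≥ e^x}] and assume there exist ε > 0, C > 0 and x₀ such that G(x) ≤ C·e^{−εx} for all x ≥ x₀. Let I : ℝ → [0,∞) satisfy P_BS(x, I(x)) = E[(e^x − S)₊] for all x ∈ ℝ, and define Φ(x) := I(x) − √(2x/T) − n/√T − n²/(2√(2Tx)) for x > 0. Then limsup_{x→∞} √(2Tx)·|Φ(x)| ≤ 1. -/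
open MeasureTheory Filter

section helpers
open Set

lemma IV_exp_small {w : ℝ} (h0 : 0 ≤ w) (h1 : w ≤ 1/2) : Real.exp w ≤ 1 + 2*w := by
  have h2 : -w + 1 ≤ Real.exp (-w) := Real.add_one_le_exp (-w)
  have h3 : Real.exp w * Real.exp (-w) = 1 := by rw [← Real.exp_add]; simp
  nlinarith [Real.exp_pos w, Real.exp_pos (-w)]

lemma IV_alg_bound {x δ D n u : ℝ} (hx : 0 < x) (hD : 0 < D) (hDδ : D^2 = δ^2 + 2*x)
    (hu : u = δ + D) (hδn : n ≤ δ) :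
    Real.sqrt (2*x) * |u - (Real.sqrt (2*x) + n + n^2/(2*Real.sqrt (2*x)))|
      ≤ Real.sqrt (2*x) * (δ - n) + |δ^2 - n^2| / 2 + n^2 * δ^2 / (16*x) := by
  set s := Real.sqrt (2*x) with hsdef
  have hspos : 0 < s := Real.sqrt_pos.mpr (by linarith)
  have hs2 : s^2 = 2*x := Real.sq_sqrt (by linarith)
  have hsD : s ≤ D := by
    have h1 : s ≤ Real.sqrt (D^2) := Real.sqrt_le_sqrt (by nlinarith)
    rwa [Real.sqrt_sq hD.le] at h1
  have hne1 : D + s ≠ 0 := by positivity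
  have hne2 : s ≠ 0 := hspos.ne'
  have hδ2 : δ^2 = D^2 - s^2 := by nlinarith
  have e1 : (δ^2 - n^2)/(D+s) - n^2*δ^2/((D+s)^2*(2*s)) = (D - s) - n^2/(2*s) := by
    rw [hδ2]; field_simp; ring
  have key : u - (s + n + n^2/(2*s)) = (δ-n) + ((δ^2-n^2)/(D+s) - n^2*δ^2/((D+s)^2*(2*s))) := by
    rw [e1, hu]; ring
  have habs : |u - (s + n + n^2/(2*s))| ≤ (δ-n) + |δ^2-n^2|/(D+s) + n^2*δ^2/((D+s)^2*(2*s)) := by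
    rw [key]
    calc |(δ-n) + ((δ^2-n^2)/(D+s) - n^2*δ^2/((D+s)^2*(2*s)))|
        ≤ |δ-n| + |(δ^2-n^2)/(D+s) - n^2*δ^2/((D+s)^2*(2*s))| := abs_add_le _ _
      _ ≤ |δ-n| + (|(δ^2-n^2)/(D+s)| + |n^2*δ^2/((D+s)^2*(2*s))|) := by
          gcongr; exact abs_sub _ _
      _ = (δ-n) + |δ^2-n^2|/(D+s) + n^2*δ^2/((D+s)^2*(2*s)) := by
          rw [abs_of_nonneg (by linarith), abs_div, abs_of_nonneg (by positivity : (0:ℝ) ≤ D+s),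
            abs_of_nonneg (by positivity : (0:ℝ) ≤ n^2*δ^2/((D+s)^2*(2*s)))]
          ring
  have hmul := mul_le_mul_of_nonneg_left habs hspos.le
  refine hmul.trans ?_
  have b2 : s * (|δ^2-n^2|/(D+s)) ≤ |δ^2-n^2| / 2 := by
    rw [← mul_div_assoc, div_le_div_iff₀ (by positivity) (by norm_num : (0:ℝ) < 2)]
    nlinarith [abs_nonneg (δ^2 - n^2)]
  have b3 : s * (n^2*δ^2/((D+s)^2*(2*s))) ≤ n^2 * δ^2 / (16*x) := by
    have h8 : 8 * x ≤ (D+s)^2 := by nlinarith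
    have heq : s * (n^2*δ^2/((D+s)^2*(2*s))) = n^2*δ^2/(2*(D+s)^2) := by
      field_simp
    rw [heq]
    apply div_le_div_of_nonneg_left (by positivity) (by positivity) (by linarith)
  nlinarith [b2, b3]

namespace SN

noncomputable def phi (t : ℝ) : ℝ := Real.exp (-t ^ 2 / 2) / Real.sqrt (2 * Real.pi)

lemma sqrt2pi_pos : 0 < Real.sqrt (2 * Real.pi) :=
  Real.sqrt_pos.mpr (by positivity)

lemma phi_pos (t : ℝ) : 0 < phi t := div_pos (Real.exp_pos _) sqrt2pi_pos

lemma phi_eq (t : ℝ) : phi t = Real.exp (-(1/2) * t ^ 2) / Real.sqrt (2 * Real.pi) := by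
  unfold phi; ring_nf

lemma integrable_phi : Integrable phi := by
  have : Integrable (fun t : ℝ => Real.exp (-(1/2) * t ^ 2)) :=
    integrable_exp_neg_mul_sq (by norm_num)
  have h := this.div_const (Real.sqrt (2 * Real.pi))
  exact h.congr (by filter_upwards with t; rw [phi_eq])

lemma integral_phi : ∫ t, phi t = 1 := by
  have : ∫ t, phi t = (∫ t : ℝ, Real.exp (-(1/2) * t ^ 2)) / Real.sqrt (2 * Real.pi) := by
    rw [← integral_div]; congr 1; ext t; rw [phi_eq]
  rw [this, integral_gaussian]
  rw [div_eq_one_iff_eq (ne_of_gt sqrt2pi_pos)]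
  congr 1
  rw [div_div_eq_mul_div, div_one]
  ring

lemma cdf_eq (y : ℝ) : stdNormalCDF y = ∫ t in Iic y, phi t := rfl

lemma cdf_sub (a b : ℝ) (hab : a ≤ b) :
    stdNormalCDF b - stdNormalCDF a = ∫ t in Ioc a b, phi t := by
  rw [cdf_eq, cdf_eq, ← Set.Iic_union_Ioc_eq_Iic hab,
    setIntegral_union (Set.Iic_disjoint_Ioc le_rfl) measurableSet_Ioc
      integrable_phi.integrableOn integrable_phi.integrableOn]
  ring

lemma cdf_mono : Monotone stdNormalCDF := by
  intro a b hab
  have := cdf_sub a b hab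
  have h2 : 0 ≤ ∫ t in Ioc a b, phi t :=
    setIntegral_nonneg measurableSet_Ioc (fun t _ => (phi_pos t).le)
  linarith

lemma cdf_lower (a b c : ℝ) (hab : a ≤ b) (hc : ∀ t ∈ Icc a b, c ≤ phi t) :
    c * (b - a) ≤ stdNormalCDF b - stdNormalCDF a := by
  rw [cdf_sub a b hab]
  have := setIntegral_ge_of_const_le (μ := volume) (c := c) measurableSet_Ioc
    (by rw [Real.volume_Ioc]; exact ENNReal.ofReal_ne_top)
    (fun t ht => hc t ⟨ht.1.le, ht.2⟩) integrable_phi.integrableOn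
  rwa [Real.volume_real_Ioc_of_le hab, smul_eq_mul, mul_comm] at this

lemma phi_lower {M t : ℝ} (h : |t| ≤ M) :
    Real.exp (-M ^ 2 / 2) / Real.sqrt (2 * Real.pi) ≤ phi t := by
  unfold phi
  gcongr Real.exp ?_ / _
  have : t ^ 2 ≤ M ^ 2 := by nlinarith [abs_nonneg t, sq_abs t, neg_abs_le t, le_abs_self t]
  linarith

lemma mem_abs_le {a b t : ℝ} (ht : t ∈ Icc a b) : |t| ≤ max |a| |b| := by
  rw [abs_le]
  constructor
  · calc -(max |a| |b|) ≤ -|a| := by simp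
      _ ≤ a := neg_abs_le a
      _ ≤ t := ht.1
  · calc t ≤ b := ht.2
      _ ≤ |b| := le_abs_self b
      _ ≤ max |a| |b| := le_max_right _ _

lemma cdf_strict (a b : ℝ) (hab : a < b) : stdNormalCDF a < stdNormalCDF b := by
  have := cdf_lower a b (Real.exp (-(max |a| |b|) ^ 2 / 2) / Real.sqrt (2 * Real.pi))
    hab.le (fun t ht => phi_lower (mem_abs_le ht))
  nlinarith [Real.exp_pos (-(max |a| |b|) ^ 2 / 2), sqrt2pi_pos,
    div_pos (Real.exp_pos (-(max |a| |b|) ^ 2 / 2)) sqrt2pi_pos]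

lemma cdf_pos (y : ℝ) : 0 < stdNormalCDF y := by
  have h0 : 0 ≤ stdNormalCDF (y - 1) :=
    setIntegral_nonneg measurableSet_Iic (fun t _ => (phi_pos t).le)
  have := cdf_strict (y - 1) y (by linarith)
  linarith

lemma cdf_symm (y : ℝ) : stdNormalCDF (-y) = 1 - stdNormalCDF y := by
  have h1 : stdNormalCDF (-y) = ∫ t in Iic (-y), phi t := rfl
  have heven : ∀ t : ℝ, phi (-t) = phi t := by intro t; unfold phi; ring_nf
  have h2 : (∫ t in Iic (-y), phi t) = ∫ t in Ioi y, phi t := by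
    rw [← integral_comp_neg_Ioi]
    simp only [heven]
  have h3 : (∫ t in Iic y, phi t) + (∫ t in Ioi y, phi t) = 1 := by
    rw [← integral_phi]
    rw [← setIntegral_union (Set.Iic_disjoint_Ioi le_rfl) measurableSet_Ioi
      integrable_phi.integrableOn integrable_phi.integrableOn, Set.Iic_union_Ioi,
      setIntegral_univ]
  rw [h1, h2, cdf_eq]
  linarith

lemma mills (y : ℝ) (hy : 0 < y) : stdNormalCDF (-y) ≤ phi y / y := by
  have key : (∫ t in Iic (-y), (-t) * Real.exp (-t ^ 2 / 2)) = Real.exp (-y ^ 2 / 2) := by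
    have hderiv : ∀ t : ℝ, HasDerivAt (fun s : ℝ => Real.exp (-s ^ 2 / 2))
        ((-t) * Real.exp (-t ^ 2 / 2)) t := by
      intro t
      have h1 : HasDerivAt (fun s : ℝ => -s ^ 2 / 2) (-t) t := by
        have := ((hasDerivAt_pow 2 t).neg).div_const 2
        simpa using this.congr_deriv (by ring)
      simpa [mul_comm] using h1.exp
    have hint : IntegrableOn (fun t : ℝ => (-t) * Real.exp (-t ^ 2 / 2)) (Iic (-y)) := by
      have : Integrable (fun t : ℝ => t * Real.exp (-(1/2) * t ^ 2)) :=
        integrable_mul_exp_neg_mul_sq (by norm_num)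
      exact ((this.neg).congr (by filter_upwards with t; simp only [Pi.neg_apply]; ring_nf)).integrableOn
    have hlim : Tendsto (fun s : ℝ => Real.exp (-s ^ 2 / 2)) atBot (nhds 0) := by
      have h1 : Tendsto (fun s : ℝ => s ^ 2) atBot atTop := by
        apply tendsto_atTop_mono' atBot ?_ tendsto_neg_atBot_atTop
        filter_upwards [eventually_le_atBot (-1 : ℝ)] with s hs
        nlinarith
      have h2 : Tendsto (fun s : ℝ => -s ^ 2 / 2) atBot atBot := by
        apply Tendsto.atBot_div_const (by norm_num : (0:ℝ) < 2)
        exact (tendsto_neg_atTop_atBot.comp h1).congr (fun s => by simp)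
      exact (Real.tendsto_exp_atBot.comp h2).congr (fun s => by simp [Function.comp])
    have := integral_Iic_of_hasDerivAt_of_tendsto' (a := -y)
      (fun t _ => hderiv t) hint hlim
    simpa using this
  have step : stdNormalCDF (-y) ≤ (∫ t in Iic (-y), (-t / y) * phi t) := by
    rw [cdf_eq]
    apply setIntegral_mono_on integrable_phi.integrableOn
      ?_ measurableSet_Iic
    · intro t ht
      have h1 : 1 ≤ -t / y := by
        rw [le_div_iff₀ hy]
        simp only [Set.mem_Iic] at ht
        linarith
      nlinarith [phi_pos t]
    · have : Integrable (fun t => (-t / y) * phi t) := by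
        have : Integrable (fun t : ℝ => t * Real.exp (-(1/2) * t ^ 2)) :=
          integrable_mul_exp_neg_mul_sq (by norm_num)
        have h2 := (this.div_const (Real.sqrt (2 * Real.pi))).div_const y |>.neg
        exact h2.congr (by
          filter_upwards with t
          simp only [Pi.neg_apply]
          unfold phi
          ring_nf)
      exact this.integrableOn
  have step2 : (∫ t in Iic (-y), (-t / y) * phi t) = phi y / y := by
    have : ∀ t : ℝ, (-t / y) * phi t = ((-t) * Real.exp (-t ^ 2 / 2)) / (y * Real.sqrt (2 * Real.pi)) := by
      intro t; unfold phi; ring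
    simp only [this]
    rw [integral_div, key]
    unfold phi
    rw [div_div, mul_comm y (Real.sqrt (2 * Real.pi))]
  linarith

end SN

namespace SN2
variable {Ω : Type*} [MeasurableSpace Ω] {μ : Measure Ω}

lemma putcall [IsProbabilityMeasure μ] {S : Ω → ℝ} (hSint : Integrable S μ) (c : ℝ) :
    ∫ ω, max (c - S ω) 0 ∂μ = c - (∫ ω, S ω ∂μ) + ∫ ω, max (S ω - c) 0 ∂μ := by
  have h1 : Integrable (fun ω => max (S ω - c) 0) μ := (hSint.sub (integrable_const c)).pos_part
  have h2 : Integrable (fun ω => c - S ω) μ := (integrable_const c).sub hSint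
  have key : ∀ ω, max (c - S ω) 0 = (c - S ω) + max (S ω - c) 0 := by
    intro ω
    rcases le_total (S ω) c with h | h
    · rw [max_eq_left (by linarith), max_eq_right (by linarith)]; ring
    · rw [max_eq_right (by linarith), max_eq_left (by linarith)]; ring
  calc ∫ ω, max (c - S ω) 0 ∂μ = ∫ ω, ((c - S ω) + max (S ω - c) 0) ∂μ := by
        exact integral_congr_ae (Eventually.of_forall key)
    _ = (∫ ω, (c - S ω) ∂μ) + ∫ ω, max (S ω - c) 0 ∂μ := integral_add h2 h1
    _ = c - (∫ ω, S ω ∂μ) + ∫ ω, max (S ω - c) 0 ∂μ := by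
        rw [integral_sub (integrable_const c) hSint]
        simp

lemma tail_bound [IsFiniteMeasure μ] {S : Ω → ℝ} (hSint : Integrable S μ) {c : ℝ} (hc : 0 ≤ c) :
    ∫ ω, max (S ω - c) 0 ∂μ ≤ ∫ ω in {ω | c ≤ S ω}, S ω ∂μ := by
  set S₁ := hSint.1.mk S with hS₁def
  have hmeas : StronglyMeasurable S₁ := hSint.1.stronglyMeasurable_mk
  have heq : S =ᵐ[μ] S₁ := hSint.1.ae_eq_mk
  have hS₁int : Integrable S₁ μ := hSint.congr heq
  have hA' : MeasurableSet {ω | c ≤ S₁ ω} :=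
    measurableSet_le measurable_const hmeas.measurable
  have step1 : ∫ ω, max (S ω - c) 0 ∂μ = ∫ ω, max (S₁ ω - c) 0 ∂μ :=
    integral_congr_ae (heq.mono fun ω h => by simp only []; rw [h])
  have step2 : ∫ ω, max (S₁ ω - c) 0 ∂μ ≤ ∫ ω, ({ω | c ≤ S₁ ω}).indicator S₁ ω ∂μ := by
    apply integral_mono_ae ((hS₁int.sub (integrable_const c)).pos_part)
      (hS₁int.indicator hA')
    filter_upwards with ω
    simp only [Pi.sub_apply]
    by_cases h : c ≤ S₁ ω
    · rw [Set.indicator_of_mem (show ω ∈ {ω | c ≤ S₁ ω} from h)]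
      exact max_le (by linarith) (by linarith)
    · rw [Set.indicator_of_notMem (show ω ∉ {ω | c ≤ S₁ ω} from h),
        max_eq_right (by push_neg at h; linarith)]
  have step3 : ∫ ω, ({ω | c ≤ S₁ ω}).indicator S₁ ω ∂μ = ∫ ω in {ω | c ≤ S₁ ω}, S₁ ω ∂μ :=
    integral_indicator hA'
  have hsets : {ω | c ≤ S ω} =ᵐ[μ] {ω | c ≤ S₁ ω} :=
    eventuallyEq_set.mpr (heq.mono fun ω h => by simp [Set.mem_setOf_eq, h])
  have step4 : ∫ ω in {ω | c ≤ S₁ ω}, S₁ ω ∂μ = ∫ ω in {ω | c ≤ S ω}, S ω ∂μ := by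
    rw [setIntegral_congr_set hsets.symm]
    exact integral_congr_ae (ae_restrict_of_ae heq.symm)
  linarith

end SN2

end helpers

set_option maxHeartbeats 1000000 in
/-- higher-order right-wing expansion of the Put-implied volatility under
the exponential tail condition `G(x) ≤ C·e^{-εx}`, where `G(x) = E[S·1_{S ≥ eˣ}]`. -/
theorem iv_right_wing_higher_order_exp
    {Ω : Type*} [MeasurableSpace Ω] (μ : Measure Ω) [IsProbabilityMeasure μ]
    (S : Ω → ℝ) (hSpos : ∀ᵐ ω ∂μ, 0 < S ω) (hSint : Integrable S μ)
    (m : ℝ) (hm : m = 1 - ∫ ω, S ω ∂μ) (hm0 : 0 < m) (hm1 : m < 1)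
    (T : ℝ) (hT : 0 < T) (n : ℝ) (hn : stdNormalCDF n = m)
    (ε C x₀ : ℝ) (hε : 0 < ε) (hC : 0 < C)
    (hG : ∀ x : ℝ, x₀ ≤ x →
      (∫ ω in {ω | Real.exp x ≤ S ω}, S ω ∂μ) ≤ C * Real.exp (-ε * x))
    (I : ℝ → ℝ) (hInonneg : ∀ x, 0 ≤ I x)
    (hI : ∀ x : ℝ, PBS T x (I x) = ∫ ω, max (Real.exp x - S ω) 0 ∂μ)
    (Φ : ℝ → ℝ)
    (hΦ : ∀ x : ℝ, Φ x = I x - Real.sqrt (2 * x / T) - n / Real.sqrt T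
      - n ^ 2 / (2 * Real.sqrt (2 * T * x))) :
    limsup (fun x => Real.sqrt (2 * T * x) * |Φ x|) atTop ≤ 1 := by
  have hsT : 0 < Real.sqrt T := Real.sqrt_pos.mpr hT
  set R : ℝ → ℝ := fun x => ∫ ω, max (S ω - Real.exp x) 0 ∂μ with hRdef
  have hES : ∫ ω, S ω ∂μ = 1 - m := by linarith
  have hP : ∀ x : ℝ, (∫ ω, max (Real.exp x - S ω) 0 ∂μ) = Real.exp x - (1 - m) + R x := by
    intro x; rw [SN2.putcall hSint (Real.exp x), hES]
  have hR0 : ∀ x : ℝ, 0 ≤ R x := fun x => integral_nonneg fun ω => le_max_right _ _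
  have hRt : ∀ x : ℝ, x₀ ≤ x → R x ≤ C * Real.exp (-ε * x) := fun x hx =>
    (SN2.tail_bound hSint (Real.exp_pos x).le).trans (hG x hx)
  have hIpos : ∀ x : ℝ, 0 < x → 0 < I x := by
    intro x hx
    rcases (hInonneg x).lt_or_eq with h | h
    · exact h
    · exfalso
      have hPBS : PBS T x (I x) = max (Real.exp x - 1) 0 := by rw [← h]; simp [PBS]
      have h1 : max (Real.exp x - 1) 0 = Real.exp x - 1 :=
        max_eq_left (by linarith [Real.one_le_exp hx.le])
      have h2 := hI x
      rw [hPBS, h1, hP x] at h2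
      nlinarith [hR0 x]
  -- main eventual estimate
  have main : ∀ r : ℝ, 0 < r → ∀ᶠ x in atTop, Real.sqrt (2 * T * x) * |Φ x| ≤ 1 + r := by
    intro r hr
    set η : ℝ := min (1/(4*(|n|+1))) (r/(12*(|n|+1))) with hηdef
    have hnpos : 0 < |n| + 1 := by positivity
    have hη0 : 0 < η := lt_min (by positivity) (by positivity)
    have hη1 : η ≤ 1/(4*(|n|+1)) := min_le_left _ _
    have hη2 : η ≤ r/(12*(|n|+1)) := min_le_right _ _
    have hη3 : η ≤ 1 := by
      refine hη1.trans ?_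
      rw [div_le_one (by positivity)]
      nlinarith [abs_nonneg n]
    set c : ℝ := Real.exp (-(|n|+η)^2/2) / Real.sqrt (2*Real.pi) with hcdef
    have hc0 : 0 < c := div_pos (Real.exp_pos _) SN.sqrt2pi_pos
    set β : ℝ := stdNormalCDF (n+η) - stdNormalCDF n with hβdef
    have hβ0 : 0 < β := sub_pos.mpr (SN.cdf_strict n (n+η) (by linarith))
    have hw0 : 0 ≤ 2*η*(|n|+1) := by positivity
    have hw1 : 2*η*(|n|+1) ≤ 1/2 := by
      have h := mul_le_mul_of_nonneg_right hη1 hnpos.le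
      rw [div_mul_eq_mul_div, one_mul, le_div_iff₀ (by positivity)] at h
      nlinarith
    have hw2 : 2*(2*η*(|n|+1)) ≤ r/3 := by
      have h := mul_le_mul_of_nonneg_right hη2 hnpos.le
      rw [div_mul_eq_mul_div, le_div_iff₀ (by positivity)] at h
      nlinarith
    -- limits
    have hsqrt2x : Tendsto (fun x : ℝ => Real.sqrt (2*x)) atTop atTop := by
      have h1 : Tendsto (fun x : ℝ => 2*x) atTop atTop :=
        Tendsto.const_mul_atTop two_pos tendsto_id
      have h2 : Tendsto Real.sqrt atTop atTop := by
        rw [show Real.sqrt = fun x : ℝ => x ^ (1/2 : ℝ) from funext Real.sqrt_eq_rpow]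
        exact tendsto_rpow_atTop (by norm_num)
      exact h2.comp h1
    have hexp0 : Tendsto (fun x : ℝ => C * Real.exp (-ε*x)) atTop (nhds 0) := by
      have h1 : Tendsto (fun x : ℝ => -ε*x) atTop atBot :=
        Tendsto.const_mul_atTop_of_neg (neg_lt_zero.mpr hε) tendsto_id
      have h2 := Real.tendsto_exp_atBot.comp h1
      simpa [Function.comp] using h2.const_mul C
    have hinv0 : Tendsto (fun x : ℝ => 1/(Real.sqrt (2*Real.pi)*Real.sqrt (2*x))) atTop (nhds 0) := by
      have h1 := (Tendsto.const_mul_atTop SN.sqrt2pi_pos hsqrt2x).inv_tendsto_atTop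
      exact h1.congr (fun x => (one_div _).symm)
    have hg0 : Tendsto (fun x : ℝ => C*Real.exp (-ε*x) + 1/(Real.sqrt (2*Real.pi)*Real.sqrt (2*x)))
        atTop (nhds 0) := by simpa using hexp0.add hinv0
    have hxe0 : Tendsto (fun x : ℝ => Real.sqrt (2*x)*(C*Real.exp (-ε*x))/c) atTop (nhds 0) := by
      apply squeeze_zero' (g := fun x : ℝ => (2*C/c)*(x*Real.exp (-ε*x)))
      · filter_upwards [eventually_ge_atTop (1:ℝ)] with x hx; positivity
      · filter_upwards [eventually_ge_atTop (1:ℝ)] with x hx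
        have h1 : Real.sqrt (2*x) ≤ 2*x := by
          have h2 : Real.sqrt (2*x) ≤ Real.sqrt ((2*x)^2) := Real.sqrt_le_sqrt (by nlinarith)
          rwa [Real.sqrt_sq (by linarith)] at h2
        rw [div_le_iff₀ hc0] at *
        have h3 : 0 ≤ C * Real.exp (-ε*x) := by positivity
        calc Real.sqrt (2*x)*(C*Real.exp (-ε*x)) ≤ (2*x)*(C*Real.exp (-ε*x)) :=
              mul_le_mul_of_nonneg_right h1 h3
          _ = (2*C/c)*(x*Real.exp (-ε*x))*c := by field_simp
      · have h1 : Tendsto (fun x : ℝ => x*Real.exp (-ε*x)) atTop (nhds 0) := by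
          have h2 := tendsto_rpow_mul_exp_neg_mul_atTop_nhds_zero 1 ε hε
          apply h2.congr'
          filter_upwards [eventually_ge_atTop (0:ℝ)] with x hx
          rw [Real.rpow_one]
        simpa using h1.const_mul (2*C/c)
    have hE5 : Tendsto (fun x : ℝ => n^2*(|n|+1)^2/(16*x)) atTop (nhds 0) := by
      have h2 := tendsto_inv_atTop_zero.const_mul (n^2*(|n|+1)^2/16)
      rw [mul_zero] at h2
      apply h2.congr
      intro x
      ring
    have hd4 : 0 < r*c/(3*(2*|n|+1)) := by positivity
    filter_upwards [eventually_ge_atTop (max x₀ 1),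
      hg0.eventually_lt_const hβ0,
      hg0.eventually_lt_const hd4,
      hxe0.eventually_lt_const (show (0:ℝ) < r/6 by linarith),
      hE5.eventually_lt_const (show (0:ℝ) < r/6 by linarith)]
      with x hx1 hx2 hx3 hx4 hx5
    have hxx0 : x₀ ≤ x := le_trans (le_max_left _ _) hx1
    have hx1' : (1:ℝ) ≤ x := le_trans (le_max_right _ _) hx1
    have hxpos : 0 < x := by linarith only [hx1']
    have hσ : 0 < I x := hIpos x hxpos
    have hu : 0 < I x * Real.sqrt T := by positivity
    have hune : I x * Real.sqrt T ≠ 0 := hu.ne'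
    set u : ℝ := I x * Real.sqrt T with hudef
    set δ : ℝ := -x/u + u/2 with hδdef
    set D : ℝ := x/u + u/2 with hDdef
    have hDpos : 0 < D := by rw [hDdef]; positivity
    have hDδ : D^2 = δ^2 + 2*x := by
      rw [hDdef, hδdef]; field_simp; ring
    have huδD : u = δ + D := by rw [hDdef, hδdef]; field_simp; ring
    have hdm : -dminus T x (I x) = D := by
      rw [hDdef]; unfold dminus; rw [← hudef]; ring
    have hdp : -dplus T x (I x) = -δ := by
      rw [hδdef]; unfold dplus; rw [← hudef]
    have hdp' : dplus T x (I x) = δ := by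
      have h := hdp; linarith only [h]
    have heq1 : Real.exp x * stdNormalCDF D - stdNormalCDF (-δ) = Real.exp x - (1-m) + R x := by
      have h2 := hI x
      rw [PBS, if_neg hσ.ne', hP x, hdm, hdp] at h2
      exact h2
    clear_value D δ u
    have hNδ : stdNormalCDF δ = m + (R x + Real.exp x * stdNormalCDF (-D)) := by
      have s1 : stdNormalCDF D = 1 - stdNormalCDF (-D) := by
        have h := SN.cdf_symm D; linarith only [h]
      have s2 : stdNormalCDF (-δ) = 1 - stdNormalCDF δ := SN.cdf_symm δ
      rw [s1, s2] at heq1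
      linear_combination heq1
    set A : ℝ := R x + Real.exp x * stdNormalCDF (-D) with hAdef
    have hA0 : 0 < A :=
      add_pos_of_nonneg_of_pos (hR0 x) (mul_pos (Real.exp_pos x) (SN.cdf_pos (-D)))
    have hsx : 0 < Real.sqrt (2*x) := Real.sqrt_pos.mpr (by linarith only [hxpos])
    have hsD : Real.sqrt (2*x) ≤ D := by
      have h1 : Real.sqrt (2*x) ≤ Real.sqrt (D^2) :=
        Real.sqrt_le_sqrt (by nlinarith only [hDδ, sq_nonneg δ])
      rwa [Real.sqrt_sq hDpos.le] at h1
    -- Mills bounds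
    have hmills : Real.exp x * stdNormalCDF (-D)
        ≤ Real.exp (-δ^2/2)/(Real.sqrt (2*Real.pi)*Real.sqrt (2*x)) := by
      have h1 := SN.mills D hDpos
      have h2 : SN.phi D = Real.exp (-δ^2/2) * (Real.exp x)⁻¹ / Real.sqrt (2*Real.pi) := by
        unfold SN.phi
        rw [← Real.exp_neg, ← Real.exp_add]
        congr 2
        rw [hDδ]; ring
      have h3 : Real.exp x * stdNormalCDF (-D) ≤ Real.exp x * (SN.phi D / D) :=
        mul_le_mul_of_nonneg_left h1 (Real.exp_pos x).le
      have h4 : Real.exp x * (SN.phi D / D)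
          = Real.exp (-δ^2/2)/(Real.sqrt (2*Real.pi)*D) := by
        rw [h2]
        field_simp
      have h5 : Real.exp (-δ^2/2)/(Real.sqrt (2*Real.pi)*D)
          ≤ Real.exp (-δ^2/2)/(Real.sqrt (2*Real.pi)*Real.sqrt (2*x)) := by
        apply div_le_div_of_nonneg_left (Real.exp_pos _).le (by positivity)
        exact mul_le_mul_of_nonneg_left hsD SN.sqrt2pi_pos.le
      linarith only [h3, h4, h5]
    have hmills1 : Real.exp x * stdNormalCDF (-D)
        ≤ 1/(Real.sqrt (2*Real.pi)*Real.sqrt (2*x)) := by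
      refine hmills.trans ?_
      apply div_le_div_of_nonneg_right ?_ (by positivity)
      exact Real.exp_le_one_iff.mpr (by nlinarith only [sq_nonneg δ])
    have hAg : A ≤ C*Real.exp (-ε*x) + 1/(Real.sqrt (2*Real.pi)*Real.sqrt (2*x)) :=
      add_le_add (hRt x hxx0) hmills1
    have hAsharp : A ≤ C*Real.exp (-ε*x) + Real.exp (-δ^2/2)/(Real.sqrt (2*Real.pi)*Real.sqrt (2*x)) :=
      add_le_add (hRt x hxx0) hmills
    -- δ bounds
    have hβm : stdNormalCDF (n+η) = m + β := by rw [hβdef, hn]; ring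
    have hδn : n < δ := by
      by_contra h
      push_neg at h
      have h2 := SN.cdf_mono h
      rw [hNδ, hn] at h2
      linarith only [h2, hA0]
    have hδη : δ < n + η := by
      by_contra h
      push_neg at h
      have h2 := SN.cdf_mono h
      rw [hNδ, hβm] at h2
      have hβA : β ≤ A := (add_le_add_iff_left m).mp h2
      exact lt_irrefl β (lt_of_le_of_lt (hβA.trans hAg) hx2)
    have hδabs : |δ| ≤ |n| + η := by
      have h1 : |δ - n| ≤ η := by
        rw [abs_le]; constructor <;> linarith only [hδn, hδη]
      calc |δ| = |n + (δ - n)| := by ring_nf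
        _ ≤ |n| + |δ - n| := abs_add_le _ _
        _ ≤ |n| + η := by linarith only [h1]
    have htri : |n| ≤ |δ| + η := by
      have h1 : |n - δ| ≤ η := by
        rw [abs_le]; constructor <;> linarith only [hδn, hδη]
      calc |n| = |δ + (n - δ)| := by ring_nf
        _ ≤ |δ| + |n - δ| := abs_add_le _ _
        _ ≤ |δ| + η := by linarith only [h1]
    have hlow : c * (δ - n) ≤ A := by
      have h1 := SN.cdf_lower n δ c hδn.le (fun t ht => by
        rw [hcdef]
        apply SN.phi_lower
        have h2 := SN.mem_abs_le ht
        have h3 : max |n| |δ| ≤ |n| + η := max_le (by linarith only [hη0]) hδabs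
        linarith only [h2, h3])
      rw [hNδ, hn] at h1
      linarith only [h1]
    -- term 1
    have hz : ((|n|+η)^2 - δ^2)/2 ≤ 2*η*(|n|+1) := by
      have f1 : |n| + η - |δ| ≤ 2*η := by linarith only [htri]
      have f2 : 0 ≤ |n| + η - |δ| := by linarith only [hδabs]
      have f3 : |n| + η + |δ| ≤ 2*|n| + 2*η := by linarith only [hδabs]
      have f4 : ((|n|+η) - |δ|) * ((|n|+η) + |δ|) ≤ (2*η) * (2*|n| + 2*η) :=
        mul_le_mul f1 f3 (by positivity) (by positivity)
      nlinarith only [f4, sq_abs δ, abs_nonneg n, abs_nonneg δ, hη0, hη3]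
    have hT1 : Real.sqrt (2*x) * (δ - n) ≤ r/6 + (1 + r/3) := by
      have h1 : Real.sqrt (2*x) * (δ - n) ≤ Real.sqrt (2*x) * A / c := by
        rw [le_div_iff₀ hc0]
        linarith only [mul_le_mul_of_nonneg_left hlow hsx.le]
      have h2' : Real.sqrt (2*x) * A
          ≤ Real.sqrt (2*x)*(C*Real.exp (-ε*x))
            + Real.sqrt (2*x)*(Real.exp (-δ^2/2)/(Real.sqrt (2*Real.pi)*Real.sqrt (2*x))) := by
        linarith only [mul_le_mul_of_nonneg_left hAsharp hsx.le]
      have h2 : Real.sqrt (2*x) * A / c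
          ≤ Real.sqrt (2*x)*(C*Real.exp (-ε*x))/c
            + Real.sqrt (2*x)*(Real.exp (-δ^2/2)/(Real.sqrt (2*Real.pi)*Real.sqrt (2*x)))/c := by
        rw [← add_div]
        exact div_le_div_of_nonneg_right h2' hc0.le
      have hsimp : Real.sqrt (2*x)*(Real.exp (-δ^2/2)/(Real.sqrt (2*Real.pi)*Real.sqrt (2*x)))/c
          = Real.exp (-δ^2/2)/(Real.sqrt (2*Real.pi)*c) := by
        field_simp
      have h3 : Real.exp (-δ^2/2)/(Real.sqrt (2*Real.pi)*c)
          = Real.exp (((|n|+η)^2 - δ^2)/2) := by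
        have h4 : Real.sqrt (2*Real.pi) * c = Real.exp (-(|n|+η)^2/2) := by
          rw [hcdef]; field_simp
        rw [h4, ← Real.exp_sub]
        congr 1
        ring
      have h5 : Real.exp (((|n|+η)^2 - δ^2)/2) ≤ 1 + r/3 := by
        calc Real.exp (((|n|+η)^2 - δ^2)/2) ≤ Real.exp (2*η*(|n|+1)) :=
              Real.exp_le_exp.mpr hz
          _ ≤ 1 + 2*(2*η*(|n|+1)) := IV_exp_small hw0 hw1
          _ ≤ 1 + r/3 := by linarith only [hw2]
      rw [hsimp, h3] at h2
      linarith only [h1, h2, h5, hx4]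
    -- term 2
    have hT2 : |δ^2 - n^2| / 2 ≤ r/6 := by
      have h1 : |δ^2 - n^2| = |δ - n| * |δ + n| := by
        rw [← abs_mul]; congr 1; ring
      have h2 : |δ - n| = δ - n := abs_of_nonneg (by linarith only [hδn])
      have h3 : |δ + n| ≤ 2*|n| + 1 := by
        calc |δ + n| ≤ |δ| + |n| := abs_add_le _ _
          _ ≤ 2*|n| + 1 := by linarith only [hδabs, hη3]
      have h4 : δ - n ≤ A/c := by
        rw [le_div_iff₀ hc0]
        linarith only [hlow]
      have h5 : A < r*c/(3*(2*|n|+1)) := lt_of_le_of_lt hAg hx3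
      have h8 : (0:ℝ) < 2*|n| + 1 := by positivity
      have h6 : δ - n < r/(3*(2*|n|+1)) := by
        have h7 : A/c < r/(3*(2*|n|+1)) := by
          rw [div_lt_div_iff₀ hc0 (by positivity)]
          rw [lt_div_iff₀ (by positivity)] at h5
          linarith only [h5]
        linarith only [h4, h7]
      have hcanc : r/(3*(2*|n|+1))*(2*|n|+1) = r/3 := by
        field_simp
      have h9 := mul_le_mul_of_nonneg_right h6.le h8.le
      rw [hcanc] at h9
      calc |δ^2 - n^2| / 2 = (δ - n) * |δ + n| / 2 := by rw [h1, h2]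
        _ ≤ (δ - n) * (2*|n| + 1) / 2 := by
            apply div_le_div_of_nonneg_right ?_ (by norm_num : (0:ℝ) ≤ 2)
            exact mul_le_mul_of_nonneg_left h3 (by linarith only [hδn])
        _ ≤ r/6 := by linarith only [h9]
    -- term 3
    have hT3 : n^2*δ^2/(16*x) ≤ r/6 := by
      have h0 : |δ| ≤ |n| + 1 := by linarith only [hδabs, hη3]
      have h1 : δ^2 ≤ (|n|+1)^2 := by
        nlinarith only [h0, abs_nonneg δ, sq_abs δ]
      have h2 : n^2*δ^2/(16*x) ≤ n^2*(|n|+1)^2/(16*x) := by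
        apply div_le_div_of_nonneg_right ?_ (by positivity)
        nlinarith only [h1, sq_nonneg n]
      linarith only [h2, hx5]
    -- algebra + conversion
    have halg := IV_alg_bound hxpos hDpos hDδ huδD hδn.le
    have h2Tx : Real.sqrt (2*T*x) = Real.sqrt T * Real.sqrt (2*x) := by
      rw [show 2*T*x = T*(2*x) by ring, Real.sqrt_mul hT.le]
    have hsTx : Real.sqrt (2*x/T) = Real.sqrt (2*x) / Real.sqrt T := by
      rw [Real.sqrt_div (by linarith : (0:ℝ) ≤ 2*x)]
    have hΦx : Φ x = (u - (Real.sqrt (2*x) + n + n^2/(2*Real.sqrt (2*x))))/Real.sqrt T := by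
      rw [hΦ x, hsTx, h2Tx, hudef]
      field_simp
      ring
    have hfin : Real.sqrt (2*T*x) * |Φ x|
        = Real.sqrt (2*x) * |u - (Real.sqrt (2*x) + n + n^2/(2*Real.sqrt (2*x)))| := by
      rw [hΦx, h2Tx, abs_div, abs_of_nonneg (Real.sqrt_nonneg T)]
      field_simp
    rw [hfin]
    calc Real.sqrt (2*x) * |u - (Real.sqrt (2*x) + n + n^2/(2*Real.sqrt (2*x)))|
        ≤ Real.sqrt (2*x) * (δ - n) + |δ^2 - n^2| / 2 + n^2 * δ^2 / (16*x) := halg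
      _ ≤ (r/6 + (1 + r/3)) + r/6 + r/6 := by linarith only [hT1, hT2, hT3]
      _ ≤ 1 + r := by linarith only [hr]
  -- conclude
  have hnonneg : ∀ x : ℝ, 0 ≤ Real.sqrt (2*T*x)*|Φ x| := fun x => by positivity
  have hcobdd : IsCoboundedUnder (· ≤ ·) atTop (fun x => Real.sqrt (2*T*x)*|Φ x|) :=
    isCoboundedUnder_le_of_le atTop hnonneg
  by_contra hcon
  push_neg at hcon
  have h1 := limsup_le_of_le hcobdd (main ((limsup (fun x => Real.sqrt (2*T*x)*|Φ x|) atTop - 1)/2)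
    (by linarith))
  linarith
end
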